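/- Let Γ be a set of formulas, u1, u2 terms, v1, v2 variables, Γ1 = Γ[v1:=u1, v2:=u2] ∪ {u1 = u2}, and Γ2 = Γ[v1:=u2, v2:=u1] ∪ {u1 = u2}. Then for all terms t1, t2: if t1[v1:=u1, v2:=u2] !~_{Γ1} t2[v1:=u1, v2:=u2], then t1[v1:=u2, v2:=u1] !~_{Γ2} t2[v1:=u2, v2:=u1]. -/
import Mathlib


namespace CLKID

/-- Terms of the language: variables, the constant `0`, and the unary function `s`. -/
inductive Tm : Type where
  | var : ℕ → Tm
  | zero : Tm
  | s : Tm → Tm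
deriving DecidableEq

/-- `sIter n t` is the term `s^n t`. -/
def sIter : ℕ → Tm → Tm
  | 0, t => t
  | n + 1, t => Tm.s (sIter n t)

/-- Substitution on terms. -/
def Tm.subst (θ : ℕ → Tm) : Tm → Tm
  | .var x => θ x
  | .zero => .zero
  | .s t => .s (t.subst θ)

/-- Free variables of a term. -/
def Tm.fv : Tm → Set ℕ
  | .var x => {x}
  | .zero => ∅
  | .s t => t.fv

/-- Subterms of a term. -/
def Tm.sub : Tm → Set Tm
  | .var x => {Tm.var x}
  | .zero => {Tm.zero}
  | .s t => insert (Tm.s t) t.sub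

/-- The variable of a term (`none` if the term is of the form `s^n 0`). -/
def Tm.varOf : Tm → Option ℕ
  | .var x => some x
  | .zero => none
  | .s t => t.varOf

/-- Formulas: equations, the two inductive-predicate atoms `Add1`/`Add2`,
    and the usual first-order connectives and quantifiers. -/
inductive Fm : Type where
  | eq : Tm → Tm → Fm
  | add1 : Tm → Tm → Tm → Fm
  | add2 : Tm → Tm → Tm → Fm
  | not : Fm → Fm
  | and : Fm → Fm → Fm
  | or : Fm → Fm → Fm
  | imp : Fm → Fm → Fm
  | all : ℕ → Fm → Fm
  | ex : ℕ → Fm → Fm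
deriving DecidableEq

/-- Substitution on formulas. -/
def Fm.subst (θ : ℕ → Tm) : Fm → Fm
  | .eq t u => .eq (t.subst θ) (u.subst θ)
  | .add1 a b c => .add1 (a.subst θ) (b.subst θ) (c.subst θ)
  | .add2 a b c => .add2 (a.subst θ) (b.subst θ) (c.subst θ)
  | .not φ => .not (φ.subst θ)
  | .and φ ψ => .and (φ.subst θ) (ψ.subst θ)
  | .or φ ψ => .or (φ.subst θ) (ψ.subst θ)
  | .imp φ ψ => .imp (φ.subst θ) (ψ.subst θ)
  | .all x φ => .all x (φ.subst (Function.update θ x (Tm.var x)))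
  | .ex x φ => .ex x (φ.subst (Function.update θ x (Tm.var x)))

/-- Free variables of a formula. -/
def Fm.fv : Fm → Set ℕ
  | .eq t u => t.fv ∪ u.fv
  | .add1 a b c => a.fv ∪ b.fv ∪ c.fv
  | .add2 a b c => a.fv ∪ b.fv ∪ c.fv
  | .not φ => φ.fv
  | .and φ ψ => φ.fv ∪ ψ.fv
  | .or φ ψ => φ.fv ∪ ψ.fv
  | .imp φ ψ => φ.fv ∪ ψ.fv
  | .all x φ => φ.fv \ {x}
  | .ex x φ => φ.fv \ {x}

/-- Terms occurring in a formula. -/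
def Fm.tms : Fm → Set Tm
  | .eq t u => t.sub ∪ u.sub
  | .add1 a b c => a.sub ∪ b.sub ∪ c.sub
  | .add2 a b c => a.sub ∪ b.sub ∪ c.sub
  | .not φ => φ.tms
  | .and φ ψ => φ.tms ∪ ψ.tms
  | .or φ ψ => φ.tms ∪ ψ.tms
  | .imp φ ψ => φ.tms ∪ ψ.tms
  | .all _ φ => φ.tms
  | .ex _ φ => φ.tms

/-- The substitution `[x := t]`. -/
def sub1 (x : ℕ) (t : Tm) : ℕ → Tm := fun y => if y = x then t else Tm.var y

/-- The simultaneous substitution `[v1 := t, v2 := u]`. -/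
def sub2 (v1 v2 : ℕ) (t u : Tm) : ℕ → Tm :=
  fun z => if z = v1 then t else if z = v2 then u else Tm.var z

/-- `≡_Γ`: the smallest congruence relation on terms containing all pairs `(t, u)`
    with the equation `t = u` in `Γ`. -/
inductive EqvTm (Γ : Set Fm) : Tm → Tm → Prop where
  | base {t u : Tm} : Fm.eq t u ∈ Γ → EqvTm Γ t u
  | refl (t : Tm) : EqvTm Γ t t
  | symm {t u : Tm} : EqvTm Γ t u → EqvTm Γ u t
  | trans {t u v : Tm} : EqvTm Γ t u → EqvTm Γ u v → EqvTm Γ t v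
  | sCongr {t u : Tm} : EqvTm Γ t u → EqvTm Γ (Tm.s t) (Tm.s u)

/-- `t ~_Γ u` : `s^n t ≡_Γ s^m u` for some naturals `n`, `m`. -/
def DepTm (Γ : Set Fm) (t u : Tm) : Prop := ∃ n m : ℕ, EqvTm Γ (sIter n t) (sIter m u)

/-- A sequent: a pair of finite sets of formulas. -/
structure Seq where
  ant : Finset Fm
  suc : Finset Fm

/-- The antecedent of a sequent, as a set of formulas. -/
def antSet (S : Seq) : Set Fm := ↑S.ant

/-- `[Γ]` from Lemma on chains: `{ s^n t1 = s^n t2 | t1 = t2 ∈ Γ or t2 = t1 ∈ Γ }`. -/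
def brkt (Γ : Set Fm) : Set Fm :=
  {φ | ∃ (n : ℕ) (t1 t2 : Tm), φ = Fm.eq (sIter n t1) (sIter n t2) ∧
        (Fm.eq t1 t2 ∈ Γ ∨ Fm.eq t2 t1 ∈ Γ)}

/-- `B1(Γ ⊢ Δ)` : second arguments of `Add1` atoms in the consequent. -/
def B1 (S : Seq) : Set Tm := {b | ∃ a c, Fm.add1 a b c ∈ S.suc}

/-- `C(Γ ⊢ Δ)` : third arguments of `Add2` atoms in the antecedent
    or `Add1` atoms in the consequent. -/
def Cset (S : Seq) : Set Tm :=
  {c | (∃ a b, Fm.add2 a b c ∈ S.ant) ∨ (∃ a b, Fm.add1 a b c ∈ S.suc)}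

/-- Index sequent. -/
def IndexSequent (S : Seq) : Prop :=
  (∀ t ∈ B1 S, ∀ u ∈ Cset S, ¬ DepTm (antSet S) t u) ∧
  (∀ b ∈ B1 S, ∀ b' ∈ B1 S, ∀ n m : ℕ, EqvTm (antSet S) (sIter n b) (sIter m b') → n = m)

lemma eqvTm_sIter_congr {Γ : Set Fm} {a b : Tm} (n : ℕ) (h : EqvTm Γ a b) :
    EqvTm Γ (sIter n a) (sIter n b) := by
  induction n with
  | zero => exact h
  | succ n ih => exact EqvTm.sCongr ih

lemma eqvTm_mono {Δ Γ : Set Fm}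
    (hbase : ∀ t u, Fm.eq t u ∈ Δ → EqvTm Γ t u) :
    ∀ {a b}, EqvTm Δ a b → EqvTm Γ a b := by
  intro a b h
  induction h with
  | base hm => exact hbase _ _ hm
  | refl t => exact EqvTm.refl t
  | symm _ ih => exact EqvTm.symm ih
  | trans _ _ ih1 ih2 => exact EqvTm.trans ih1 ih2
  | sCongr _ ih => exact EqvTm.sCongr ih

lemma swap_subst {Γ : Set Fm} {u1 u2 : Tm} (v1 v2 : ℕ)
    (h12 : EqvTm Γ u1 u2) (t : Tm) :
    EqvTm Γ (t.subst (sub2 v1 v2 u2 u1)) (t.subst (sub2 v1 v2 u1 u2)) := by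
  induction t with
  | var x =>
      simp only [Tm.subst, sub2]
      split
      · exact EqvTm.symm h12
      · split
        · exact h12
        · exact EqvTm.refl _
  | zero => exact EqvTm.refl _
  | s t ih => exact EqvTm.sCongr ih

/-- With `Γ1 = Γ[v1:=u1, v2:=u2] ∪ {u1 = u2}` and
    `Γ2 = Γ[v1:=u2, v2:=u1] ∪ {u1 = u2}`:
    `t1[v1:=u1, v2:=u2] !~_{Γ1} t2[v1:=u1, v2:=u2]` implies
    `t1[v1:=u2, v2:=u1] !~_{Γ2} t2[v1:=u2, v2:=u1]`. -/
theorem dep_eqL (Γ : Set Fm) (u1 u2 : Tm) (v1 v2 : ℕ) (t1 t2 : Tm)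
    (h : ¬ DepTm ((Fm.subst (sub2 v1 v2 u1 u2) '' Γ) ∪ {Fm.eq u1 u2})
          (t1.subst (sub2 v1 v2 u1 u2)) (t2.subst (sub2 v1 v2 u1 u2))) :
    ¬ DepTm ((Fm.subst (sub2 v1 v2 u2 u1) '' Γ) ∪ {Fm.eq u1 u2})
      (t1.subst (sub2 v1 v2 u2 u1)) (t2.subst (sub2 v1 v2 u2 u1)) := by
  set Γ1 : Set Fm := (Fm.subst (sub2 v1 v2 u1 u2) '' Γ) ∪ {Fm.eq u1 u2} with hΓ1
  have h12 : EqvTm Γ1 u1 u2 := EqvTm.base (Or.inr rfl)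
  have hswap := swap_subst (Γ := Γ1) v1 v2 h12
  have hmono : ∀ {a b}, EqvTm ((Fm.subst (sub2 v1 v2 u2 u1) '' Γ) ∪ {Fm.eq u1 u2}) a b →
      EqvTm Γ1 a b := by
    apply eqvTm_mono
    intro t u hmem
    rcases hmem with ⟨φ, hφ, heq⟩ | heq
    · cases φ with
      | eq t' u' =>
          simp only [Fm.subst] at heq
          injection heq with h1 h2
          subst h1; subst h2
          have hb : EqvTm Γ1 (t'.subst (sub2 v1 v2 u1 u2)) (u'.subst (sub2 v1 v2 u1 u2)) :=
            EqvTm.base (Or.inl ⟨Fm.eq t' u', hφ, rfl⟩)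
          exact ((hswap t').trans hb).trans (hswap u').symm
      | add1 a b c => simp [Fm.subst] at heq
      | add2 a b c => simp [Fm.subst] at heq
      | not φ => simp [Fm.subst] at heq
      | and φ ψ => simp [Fm.subst] at heq
      | or φ ψ => simp [Fm.subst] at heq
      | imp φ ψ => simp [Fm.subst] at heq
      | all x φ => simp [Fm.subst] at heq
      | ex x φ => simp [Fm.subst] at heq
    · cases heq
      exact h12
  rintro ⟨n, m, he⟩
  apply h
  refine ⟨n, m, ?_⟩
  exact ((eqvTm_sIter_congr n (hswap t1)).symm.trans (hmono he)).trans
    (eqvTm_sIter_congr m (hswap t2))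

end CLKID
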